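/- For a probability measure μ on the free group F_d supported on the generators and their inverses (with all p_i > 0), the system q_j = p_j + q_j·Σ_{i≠j} p_i q_{−i} with q_j ∈ (0,1) reduces to finding x ∈ (0,1) with f(x) = 0, where f(x) = (d−1)x + 1 − Σ_{j=1}^d √(x² + 4p_j p_{−j}); and indeed f(0) ≥ 0, f(1) < 0, f is concave, and f has a unique zero in (0,1). -/

import Mathlib

private lemma sqrt_add_sq_le (c x y a b : ℝ) (hc : 0 < c)
    (ha : 0 ≤ a) (hb : 0 ≤ b) (hab : a + b = 1) :
    Real.sqrt ((a*x+b*y)^2 + c) ≤ a * Real.sqrt (x^2+c) + b * Real.sqrt (y^2+c) := by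
  have h1 : (0:ℝ) ≤ x^2 + c := by positivity
  have h2 : (0:ℝ) ≤ y^2 + c := by positivity
  set s1 := Real.sqrt (x^2+c) with hs1d
  set s2 := Real.sqrt (y^2+c) with hs2d
  have hs1 : s1^2 = x^2 + c := Real.sq_sqrt h1
  have hs2 : s2^2 = y^2 + c := Real.sq_sqrt h2
  have hn1 : 0 ≤ s1 := Real.sqrt_nonneg _
  have hn2 : 0 ≤ s2 := Real.sqrt_nonneg _
  have h12 : x*y + c ≤ s1 * s2 := by
    have hm : s1 * s2 = Real.sqrt ((x^2+c)*(y^2+c)) := (Real.sqrt_mul h1 _).symm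
    rw [hm]
    have h3 : (x*y+c)^2 ≤ (x^2+c)*(y^2+c) := by nlinarith [sq_nonneg (x-y)]
    calc x*y+c ≤ |x*y+c| := le_abs_self _
    _ = Real.sqrt ((x*y+c)^2) := (Real.sqrt_sq_eq_abs _).symm
    _ ≤ _ := Real.sqrt_le_sqrt h3
  have hR : 0 ≤ a * s1 + b * s2 := by positivity
  have e : (a*s1+b*s2)^2 = a^2*s1^2 + 2*(a*b)*(s1*s2) + b^2*s2^2 := by ring
  rw [hs1, hs2] at e
  have h4 : a^2 + 2*(a*b) + b^2 = 1 := by nlinarith [hab]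
  have h5 : 2*(a*b)*(x*y+c) ≤ 2*(a*b)*(s1*s2) := by nlinarith [h12, mul_nonneg ha hb]
  have h6 : c*(a^2+2*(a*b)+b^2) = c := by rw [h4, mul_one]
  have hmain : (a*x+b*y)^2 + c ≤ (a * s1 + b * s2)^2 := by nlinarith [e, h5, h6]
  calc Real.sqrt ((a*x+b*y)^2 + c) ≤ Real.sqrt ((a*s1+b*s2)^2) := Real.sqrt_le_sqrt hmain
  _ = a*s1+b*s2 := Real.sqrt_sq hR

private lemma sqrt_add_sq_lt (c x y a b : ℝ) (hc : 0 < c) (hxy : x ≠ y)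
    (ha : 0 < a) (hb : 0 < b) (hab : a + b = 1) :
    Real.sqrt ((a*x+b*y)^2 + c) < a * Real.sqrt (x^2+c) + b * Real.sqrt (y^2+c) := by
  have h1 : (0:ℝ) ≤ x^2 + c := by positivity
  have h2 : (0:ℝ) ≤ y^2 + c := by positivity
  set s1 := Real.sqrt (x^2+c) with hs1d
  set s2 := Real.sqrt (y^2+c) with hs2d
  have hs1 : s1^2 = x^2 + c := Real.sq_sqrt h1
  have hs2 : s2^2 = y^2 + c := Real.sq_sqrt h2
  have hn1 : 0 ≤ s1 := Real.sqrt_nonneg _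
  have hn2 : 0 ≤ s2 := Real.sqrt_nonneg _
  have hxy0 : (0:ℝ) < (x-y)^2 := by
    have := sub_ne_zero.mpr hxy; positivity
  have h12 : x*y + c < s1 * s2 := by
    have hm : s1 * s2 = Real.sqrt ((x^2+c)*(y^2+c)) := (Real.sqrt_mul h1 _).symm
    rw [hm]
    have h3 : (x*y+c)^2 < (x^2+c)*(y^2+c) := by nlinarith [hxy0, hc]
    calc x*y+c ≤ |x*y+c| := le_abs_self _
    _ = Real.sqrt ((x*y+c)^2) := (Real.sqrt_sq_eq_abs _).symm
    _ < _ := Real.sqrt_lt_sqrt (sq_nonneg _) h3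
  have hR : 0 < a * s1 + b * s2 := by
    have hs1p : 0 < s1 := Real.sqrt_pos.mpr (by positivity)
    have hs2p : 0 < s2 := Real.sqrt_pos.mpr (by positivity)
    positivity
  have e : (a*s1+b*s2)^2 = a^2*s1^2 + 2*(a*b)*(s1*s2) + b^2*s2^2 := by ring
  rw [hs1, hs2] at e
  have h4 : a^2 + 2*(a*b) + b^2 = 1 := by nlinarith [hab]
  have h5 : 2*(a*b)*(x*y+c) < 2*(a*b)*(s1*s2) := by nlinarith [h12, mul_pos ha hb]
  have h6 : c*(a^2+2*(a*b)+b^2) = c := by rw [h4, mul_one]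
  have hmain : (a*x+b*y)^2 + c < (a * s1 + b * s2)^2 := by nlinarith [e, h5, h6]
  calc Real.sqrt ((a*x+b*y)^2 + c) < Real.sqrt ((a*s1+b*s2)^2) :=
        Real.sqrt_lt_sqrt (by positivity) hmain
  _ = a*s1+b*s2 := Real.sqrt_sq hR.le

private lemma sqrt_quad_bound (c t : ℝ) (hc : 0 < c) :
    Real.sqrt (t^2 + c) ≤ Real.sqrt c + t^2 * (1/(2*Real.sqrt c)) := by
  have hsc : 0 < Real.sqrt c := Real.sqrt_pos.mpr hc
  have h2 : Real.sqrt c ^ 2 = c := Real.sq_sqrt hc.le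
  have hR : 0 ≤ Real.sqrt c + t^2 * (1/(2*Real.sqrt c)) := by positivity
  have hmain : t^2 + c ≤ (Real.sqrt c + t^2*(1/(2*Real.sqrt c)))^2 := by
    have hne : Real.sqrt c ≠ 0 := hsc.ne'
    have h4 : Real.sqrt c ^ 4 = c^2 := by
      rw [show (Real.sqrt c)^4 = ((Real.sqrt c)^2)^2 by ring, h2]
    field_simp
    nlinarith [sq_nonneg (t^2), hsc, h2, h4]
  calc Real.sqrt (t^2+c) ≤ Real.sqrt ((Real.sqrt c + t^2*(1/(2*Real.sqrt c)))^2) :=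
        Real.sqrt_le_sqrt hmain
  _ = _ := Real.sqrt_sq hR

private lemma sum_union_neg (d : ℕ) (g : ℤ → ℝ) :
    ∑ j ∈ Finset.Icc (1:ℤ) d ∪ Finset.Icc (-(d:ℤ)) (-1), g j
      = ∑ k ∈ Finset.Icc (1:ℤ) d, (g k + g (-k)) := by
  have hdisj : Disjoint (Finset.Icc (1:ℤ) (d:ℤ)) (Finset.Icc (-(d:ℤ)) (-1)) := by
    rw [Finset.disjoint_left]
    intro a ha hb
    simp only [Finset.mem_Icc] at ha hb
    omega
  rw [Finset.sum_union hdisj, Finset.sum_add_distrib]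
  congr 1
  have himg : Finset.Icc (-(d:ℤ)) (-1) = (Finset.Icc (1:ℤ) (d:ℤ)).image (fun i => -i) := by
    ext i
    simp only [Finset.mem_Icc, Finset.mem_image]
    constructor
    · intro h; exact ⟨-i, by omega, by omega⟩
    · rintro ⟨a, ha, rfl⟩; omega
  rw [himg, Finset.sum_image (by intro a _ b _ h; exact neg_inj.mp h)]

set_option maxHeartbeats 1600000 in
/-- For a probability measure on `F_d` supported on the generators and inverses
(`p_j > 0`, `Σ p_j = 1`), the system `q_j = p_j + q_j Σ_{i≠j} p_i q_{−i}`,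
`q_j ∈ (0,1)`, reduces to finding `x ∈ (0,1)` with `f(x) = 0`, where
`f(x) = (d−1)x + 1 − Σ_{j=1}^d √(x² + 4 p_j p_{−j})` and
`q_j = (−x + √(x² + 4 p_j p_{−j}))/(2 p_{−j})`; moreover `f(0) ≥ 0`, `f(1) < 0`,
`f` is concave, and `f` has a unique zero in `(0,1)`. -/
theorem abel_equation_reduction (d : ℕ) (hd : 2 ≤ d)
    (p : ℤ → ℝ)
    (hpos : ∀ j ∈ Finset.Icc (1:ℤ) d ∪ Finset.Icc (-(d:ℤ)) (-1), 0 < p j)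
    (hzero : ∀ j ∉ Finset.Icc (1:ℤ) d ∪ Finset.Icc (-(d:ℤ)) (-1), p j = 0)
    (hsum : ∑ j ∈ Finset.Icc (1:ℤ) d ∪ Finset.Icc (-(d:ℤ)) (-1), p j = 1)
    (f : ℝ → ℝ)
    (hf : ∀ x : ℝ, f x = (d - 1) * x + 1 -
      ∑ j ∈ Finset.Icc (1:ℤ) d, Real.sqrt (x ^ 2 + 4 * p j * p (-j))) :
    0 ≤ f 0 ∧ f 1 < 0 ∧ ConcaveOn ℝ Set.univ f
    ∧ (∃! x : ℝ, x ∈ Set.Ioo (0:ℝ) 1 ∧ f x = 0)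
    ∧ ∀ x ∈ Set.Ioo (0:ℝ) 1, f x = 0 →
        ∀ j ∈ Finset.Icc (1:ℤ) d ∪ Finset.Icc (-(d:ℤ)) (-1),
          (-x + Real.sqrt (x ^ 2 + 4 * p j * p (-j))) / (2 * p (-j))
            ∈ Set.Ioo (0:ℝ) 1 ∧
          (-x + Real.sqrt (x ^ 2 + 4 * p j * p (-j))) / (2 * p (-j))
            = p j + ((-x + Real.sqrt (x ^ 2 + 4 * p j * p (-j))) / (2 * p (-j))) *
              ∑ i ∈ (Finset.Icc (1:ℤ) d ∪ Finset.Icc (-(d:ℤ)) (-1)).erase j,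
                p i * ((-x + Real.sqrt (x ^ 2 + 4 * p i * p (-i))) / (2 * p i)) := by
  have hd1 : (1:ℤ) ≤ (d:ℤ) := by exact_mod_cast Nat.one_le_of_lt hd
  have hd2 : (2:ℝ) ≤ (d:ℝ) := by exact_mod_cast hd
  set S := Finset.Icc (1:ℤ) (d:ℤ) with hS
  set U := S ∪ Finset.Icc (-(d:ℤ)) (-1) with hU
  have hSU : ∀ j ∈ S, j ∈ U := fun j hj => Finset.mem_union_left _ hj
  have hnegU : ∀ i ∈ U, -i ∈ U := by
    intro i hi
    simp only [hU, hS, Finset.mem_union, Finset.mem_Icc] at hi ⊢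
    omega
  have hnegS : ∀ i ∈ U, i ∈ S ∨ -i ∈ S := by
    intro i hi
    simp only [hU, hS, Finset.mem_union, Finset.mem_Icc] at hi ⊢
    omega
  have hpU : ∀ i ∈ U, 0 < p i := hpos
  have hpnU : ∀ i ∈ U, 0 < p (-i) := fun i hi => hpU _ (hnegU i hi)
  have hcS : ∀ j ∈ S, 0 < 4 * p j * p (-j) := by
    intro j hj
    have h1 := hpU j (hSU j hj)
    have h2 := hpnU j (hSU j hj)
    positivity
  have hSne : S.Nonempty := ⟨1, by simp only [hS, Finset.mem_Icc]; omega⟩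
  have hScard : S.card = d := by
    simp only [hS, Int.card_Icc]
    omega
  have hsum' : ∑ k ∈ S, (p k + p (-k)) = 1 := by
    rw [← sum_union_neg d p]; exact hsum
  -- f 0
  have hf0 : f 0 = 1 - ∑ j ∈ S, Real.sqrt (4 * p j * p (-j)) := by
    rw [hf]; norm_num
  have h0 : 0 ≤ f 0 := by
    rw [hf0]
    have hle : ∑ j ∈ S, Real.sqrt (4 * p j * p (-j)) ≤ ∑ k ∈ S, (p k + p (-k)) := by
      refine Finset.sum_le_sum fun j hj => ?_
      have h1 := hpU j (hSU j hj)
      have h2 := hpnU j (hSU j hj)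
      have : Real.sqrt (4 * p j * p (-j)) ≤ Real.sqrt ((p j + p (-j))^2) :=
        Real.sqrt_le_sqrt (by nlinarith [sq_nonneg (p j - p (-j))])
      rwa [Real.sqrt_sq (by positivity)] at this
    linarith [hsum', hle]
  -- f 1
  have h1 : f 1 < 0 := by
    rw [hf]
    have hlt : ∀ j ∈ S, (1:ℝ) < Real.sqrt ((1:ℝ)^2 + 4 * p j * p (-j)) := by
      intro j hj
      rw [show ((1:ℝ)^2 + 4 * p j * p (-j)) = 1 + 4 * p j * p (-j) by ring]
      rw [show (1:ℝ) = Real.sqrt 1 by simp]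
      refine Real.sqrt_lt_sqrt (by norm_num) ?_
      have := hcS j hj
      simp only [Real.sqrt_one]
      linarith
    have hsum_lt := Finset.sum_lt_sum_of_nonempty hSne hlt
    have hcard : ∑ _j ∈ S, (1:ℝ) = (d:ℝ) := by
      rw [Finset.sum_const, hScard, nsmul_eq_mul, mul_one]
    rw [hcard] at hsum_lt
    linarith
  -- concavity
  have hconc : ConcaveOn ℝ Set.univ f := by
    refine ⟨convex_univ, ?_⟩
    intro x _ y _ a b ha hb hab
    simp only [smul_eq_mul]
    have hb' : b = 1 - a := by linarith
    subst hb'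
    rw [hf x, hf y, hf (a*x + (1-a)*y)]
    have hle : ∑ j ∈ S, Real.sqrt ((a*x+(1-a)*y)^2 + 4*p j*p (-j))
        ≤ ∑ j ∈ S, (a * Real.sqrt (x^2+4*p j*p (-j)) + (1-a)*Real.sqrt (y^2+4*p j*p (-j))) :=
      Finset.sum_le_sum fun j hj =>
        sqrt_add_sq_le _ x y a (1-a) (hcS j hj) ha hb (by ring)
    rw [Finset.sum_add_distrib, ← Finset.mul_sum, ← Finset.mul_sum] at hle
    set A := ∑ j ∈ S, Real.sqrt (x^2+4*p j*p (-j)) with hA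
    set B := ∑ j ∈ S, Real.sqrt (y^2+4*p j*p (-j)) with hB
    set C := ∑ j ∈ S, Real.sqrt ((a*x+(1-a)*y)^2 + 4*p j*p (-j)) with hC
    have expand : a*(((d:ℝ)-1)*x+1-A)+(1-a)*(((d:ℝ)-1)*y+1-B)
        = ((d:ℝ)-1)*(a*x+(1-a)*y)+1-(a*A+(1-a)*B) := by ring
    linarith [hle, expand]
  have keyStrict : ∀ x y : ℝ, x ≠ y → ∀ a b : ℝ, 0 < a → 0 < b → a + b = 1 →
      a * f x + b * f y < f (a*x+b*y) := by
    intro x y hxy a b ha hb hab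
    have hb' : b = 1 - a := by linarith
    subst hb'
    rw [hf x, hf y, hf (a*x + (1-a)*y)]
    have hlt : ∑ j ∈ S, Real.sqrt ((a*x+(1-a)*y)^2 + 4*p j*p (-j))
        < ∑ j ∈ S, (a * Real.sqrt (x^2+4*p j*p (-j)) + (1-a)*Real.sqrt (y^2+4*p j*p (-j))) :=
      Finset.sum_lt_sum_of_nonempty hSne fun j hj =>
        sqrt_add_sq_lt _ x y a (1-a) (hcS j hj) hxy ha hb (by ring)
    rw [Finset.sum_add_distrib, ← Finset.mul_sum, ← Finset.mul_sum] at hlt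
    set A := ∑ j ∈ S, Real.sqrt (x^2+4*p j*p (-j)) with hA
    set B := ∑ j ∈ S, Real.sqrt (y^2+4*p j*p (-j)) with hB
    set C := ∑ j ∈ S, Real.sqrt ((a*x+(1-a)*y)^2 + 4*p j*p (-j)) with hC
    have expand : a*(((d:ℝ)-1)*x+1-A)+(1-a)*(((d:ℝ)-1)*y+1-B)
        = ((d:ℝ)-1)*(a*x+(1-a)*y)+1-(a*A+(1-a)*B) := by ring
    linarith [hlt, expand]
  -- continuity
  have hcont : Continuous f := by
    have hfe : f = fun x => ((d:ℝ) - 1) * x + 1 -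
        ∑ j ∈ S, Real.sqrt (x ^ 2 + 4 * p j * p (-j)) := funext hf
    rw [hfe]
    refine Continuous.sub ((continuous_const.mul continuous_id).add continuous_const) ?_
    exact continuous_finset_sum _ fun j _ =>
      ((continuous_pow 2).add continuous_const).sqrt
  -- existence of a positive point
  have hexists_pos : ∃ t : ℝ, t ∈ Set.Ioo (0:ℝ) 1 ∧ 0 < f t := by
    set K := ∑ j ∈ S, 1 / (2 * Real.sqrt (4 * p j * p (-j))) with hKdef
    have hKpos : 0 < K := Finset.sum_pos (fun j hj => by
      have := hcS j hj
      have hs : 0 < Real.sqrt (4 * p j * p (-j)) := Real.sqrt_pos.mpr this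
      positivity) hSne
    set t := min (1/2 : ℝ) (((d:ℝ)-1)/(2*K)) with ht
    have htpos : 0 < t := lt_min (by norm_num) (by
      apply div_pos; linarith; linarith)
    have ht1 : t < 1 := lt_of_le_of_lt (min_le_left _ _) (by norm_num)
    refine ⟨t, ⟨htpos, ht1⟩, ?_⟩
    have hft : ((d:ℝ)-1)*t + 1 - (∑ j ∈ S, Real.sqrt (4*p j*p (-j))) - t^2 * K ≤ f t := by
      rw [hf t]
      have hb := Finset.sum_le_sum (fun j hj => sqrt_quad_bound _ t (hcS j hj))
      rw [Finset.sum_add_distrib, ← Finset.mul_sum] at hb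
      linarith [hb]
    have hKt : K * t ≤ ((d:ℝ)-1)/2 := by
      have hmr := min_le_right (1/2:ℝ) (((d:ℝ)-1)/(2*K))
      have : K * t ≤ K * (((d:ℝ)-1)/(2*K)) :=
        mul_le_mul_of_nonneg_left hmr hKpos.le
      rw [show K * (((d:ℝ)-1)/(2*K)) = ((d:ℝ)-1)/2 by field_simp] at this
      exact this
    have htK : t * (K * t) ≤ t * (((d:ℝ)-1)/2) :=
      mul_le_mul_of_nonneg_left hKt htpos.le
    nlinarith [hft, h0, hf0, htK, htpos, hd2]
  -- existence of zero
  obtain ⟨t, htI, hft⟩ := hexists_pos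
  obtain ⟨x0, hx0I, hfx0⟩ : ∃ x0 ∈ Set.Icc t 1, f x0 = 0 := by
    have hsub := intermediate_value_Icc' (le_of_lt htI.2) hcont.continuousOn
    have h0mem : (0:ℝ) ∈ Set.Icc (f 1) (f t) := ⟨h1.le, hft.le⟩
    obtain ⟨x0, hx0I, hfx0⟩ := hsub h0mem
    exact ⟨x0, hx0I, hfx0⟩
  have hx0Ioo : x0 ∈ Set.Ioo (0:ℝ) 1 := by
    constructor
    · linarith [hx0I.1, htI.1]
    · rcases lt_or_eq_of_le hx0I.2 with h | h
      · exact h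
      · exfalso; rw [h] at hfx0; linarith
  -- positivity before a zero
  have hpos_before : ∀ y z : ℝ, 0 < y → y < z → f z = 0 → 0 < f y := by
    intro y z hy hyz hz
    have hzpos : 0 < z := lt_trans hy hyz
    have hb : 0 < y / z := div_pos hy hzpos
    have hb1 : y / z < 1 := (div_lt_one hzpos).mpr hyz
    have ha : 0 < 1 - y / z := by linarith
    have hcomb : (1 - y/z) * 0 + (y/z) * z = y := by field_simp; ring
    have := keyStrict 0 z (by linarith) (1 - y/z) (y/z) ha hb (by ring)
    rw [hcomb, hz] at this
    nlinarith [h0, this, ha]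
  have huniq : ∃! x : ℝ, x ∈ Set.Ioo (0:ℝ) 1 ∧ f x = 0 := by
    refine ⟨x0, ⟨hx0Ioo, hfx0⟩, ?_⟩
    rintro y ⟨hyI, hy⟩
    by_contra hne
    rcases lt_or_gt_of_ne hne with h | h
    · have := hpos_before y x0 hyI.1 h hfx0; linarith
    · have := hpos_before x0 y hx0Ioo.1 h hy; linarith
  refine ⟨h0, h1, hconc, huniq, ?_⟩
  -- part 5
  intro x hx hfx j hj
  have hxpos : 0 < x := hx.1
  have hx1 : x < 1 := hx.2
  set s : ℤ → ℝ := fun i => Real.sqrt (x^2 + 4 * p i * p (-i)) with hsdef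
  have hssym : ∀ i : ℤ, s (-i) = s i := by
    intro i
    show Real.sqrt (x^2 + 4 * p (-i) * p (-(-i))) = Real.sqrt (x^2 + 4 * p i * p (-i))
    rw [neg_neg]; congr 1; ring
  have hs_sq : ∀ i ∈ U, s i ^ 2 = x^2 + 4 * p i * p (-i) := by
    intro i hi
    have h1 := hpU i hi
    have h2 := hpnU i hi
    exact Real.sq_sqrt (by positivity)
  have hs_nonneg : ∀ i : ℤ, 0 ≤ s i := fun i => Real.sqrt_nonneg _
  have hs_gt_x : ∀ i ∈ U, x < s i := by
    intro i hi
    have h1 := hpU i hi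
    have h2 := hpnU i hi
    rw [hsdef]
    rw [show (fun i => Real.sqrt (x^2 + 4 * p i * p (-i))) i
        = Real.sqrt (x^2 + 4 * p i * p (-i)) from rfl]
    rw [Real.lt_sqrt hxpos.le]
    nlinarith
  have hfsum : ∑ k ∈ S, s k = ((d:ℝ)-1)*x + 1 := by
    have := hf x
    rw [hfx] at this
    have : ∑ j ∈ S, Real.sqrt (x ^ 2 + 4 * p j * p (-j)) = ((d:ℝ) - 1) * x + 1 := by
      linarith
    exact this
  have hupper : ∀ k ∈ S, s k < x + (p k + p (-k)) := by
    intro k hk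
    have h1 := hpU k (hSU k hk)
    have h2 := hpnU k (hSU k hk)
    show Real.sqrt (x^2 + 4 * p k * p (-k)) < x + (p k + p (-k))
    rw [Real.sqrt_lt' (by positivity)]
    nlinarith [sq_nonneg (p k - p (-k)), mul_pos hxpos (add_pos h1 h2)]
  have hkey : ∀ k ∈ S, p k + p (-k) < s k := by
    intro k hk
    have hcarde : (S.erase k).card = d - 1 := by
      rw [Finset.card_erase_of_mem hk, hScard]
    have hene : (S.erase k).Nonempty := by
      rw [← Finset.card_pos, hcarde]; omega
    have hstrict : ∑ i ∈ S.erase k, s i < ∑ i ∈ S.erase k, (x + (p i + p (-i))) :=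
      Finset.sum_lt_sum_of_nonempty hene fun i hi =>
        hupper i (Finset.mem_of_mem_erase hi)
    have he1 : ∑ i ∈ S.erase k, s i + s k = ∑ i ∈ S, s i :=
      Finset.sum_erase_add S s hk
    have he2 : ∑ i ∈ S.erase k, (p i + p (-i)) + (p k + p (-k)) = ∑ i ∈ S, (p i + p (-i)) :=
      Finset.sum_erase_add S _ hk
    have he3 : ∑ i ∈ S.erase k, (x + (p i + p (-i)))
        = ((d:ℝ)-1) * x + ∑ i ∈ S.erase k, (p i + p (-i)) := by
      rw [Finset.sum_add_distrib, Finset.sum_const, hcarde, nsmul_eq_mul]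
      congr 1
      congr 1
      push_cast [Nat.cast_sub (by omega : 1 ≤ d)]
      ring
    rw [hfsum] at he1
    rw [hsum'] at he2
    rw [he3] at hstrict
    linarith
  have hxdiff : ∀ k ∈ S, (p k - p (-k))^2 < x^2 := by
    intro k hk
    have h1 := hpU k (hSU k hk)
    have h2 := hpnU k (hSU k hk)
    have hsq := hs_sq k (hSU k hk)
    have hk1 := hkey k hk
    have hspos : 0 < s k := (by positivity : (0:ℝ) < p k + p (-k)).trans hk1
    have hmm : (p k + p (-k)) * (p k + p (-k)) < s k * s k :=
      mul_self_lt_mul_self (by positivity) hk1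
    nlinarith [hmm, hsq]
  -- general facts for j ∈ U
  have hsi : ∀ i : ℤ, Real.sqrt (x ^ 2 + 4 * p i * p (-i)) = s i := fun i => rfl
  simp only [hsi]
  have hpj := hpU j hj
  have hpnj := hpnU j hj
  have hsqj := hs_sq j hj
  have hsgtj := hs_gt_x j hj
  have hdiffj : (p j - p (-j))^2 < x^2 := by
    rcases hnegS j hj with hjS | hjS
    · exact hxdiff j hjS
    · have h := hxdiff (-j) hjS
      rw [neg_neg] at h
      calc (p j - p (-j))^2 = (p (-j) - p j)^2 := by ring
      _ < x^2 := h
  have hq1 : p j < x + p (-j) := by nlinarith [hdiffj, hxpos]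
  have hslt : s j < x + 2 * p (-j) := by
    show Real.sqrt (x^2 + 4 * p j * p (-j)) < x + 2 * p (-j)
    rw [Real.sqrt_lt' (by positivity)]
    nlinarith [mul_lt_mul_of_pos_right hq1 hpnj]
  refine ⟨⟨div_pos (by linarith) (by positivity), ?_⟩, ?_⟩
  · rw [div_lt_one (by positivity)]
    linarith
  · -- the system equation
    have hterm : ∀ i ∈ U.erase j,
        p i * ((-x + s i)/(2 * p i)) = (s i - x)/2 := by
      intro i hi
      have hpi := hpU i (Finset.mem_of_mem_erase hi)
      field_simp
      ring
    have hTU : ∑ i ∈ U, (s i - x)/2 = 1 - x := by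
      have h := sum_union_neg d (fun i => (s i - x)/2)
      rw [← hS, ← hU] at h
      rw [h]
      have hcong : ∀ k ∈ S, ((s k - x)/2 + (s (-k) - x)/2) = s k - x := by
        intro k _
        rw [hssym]
        ring
      rw [Finset.sum_congr rfl hcong, Finset.sum_sub_distrib, hfsum,
        Finset.sum_const, hScard, nsmul_eq_mul]
      ring
    have hsum_erase : ∑ i ∈ U.erase j, (s i - x)/2 + (s j - x)/2 = ∑ i ∈ U, (s i - x)/2 :=
      Finset.sum_erase_add U _ hj
    have hT : ∑ i ∈ U.erase j, p i * ((-x + s i)/(2 * p i)) = 1 - x - (s j - x)/2 := by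
      rw [Finset.sum_congr rfl hterm]
      linarith [hsum_erase, hTU]
    rw [hT]
    have hfact : (-x + s j) * (x + s j) = 4 * p j * p (-j) := by
      linear_combination hsqj
    have hkey2 : (-x + s j)/(2*p (-j)) * ((x + s j)/2) = p j := by
      rw [div_mul_div_comm, hfact]
      field_simp
      ring
    have e1 : (-x + s j)/(2*p (-j)) * (1 - x - (s j - x)/2)
        = (-x + s j)/(2*p (-j)) - (-x + s j)/(2*p (-j)) * ((x + s j)/2) := by ring
    rw [e1, hkey2]
    ring
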